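/- Let γ > 0 and n ∈ ℕ, and define ϵ_{m,2}(γ) = −(γ²/4) a_{m,0}(γ) + (γ/2) a_{m,1}(γ) − a_{m,2}(γ) for m ≥ 0. Then ∑_{k=−2}^{2} χ_{k,n} · ϵ_{n+k,2}(γ) = −γ²/2, where terms with n+k < 0 are omitted. -/

import Mathlib

open Real Filter MeasureTheory

noncomputable def acoef (γ : ℝ) : ℕ → ℕ → ℝ
  | n, m =>
    if m = 0 then 1
    else if n < m then 0
    else if m = n then -(γ / (n : ℝ)) * acoef γ (n - 1) (n - 1)
    else (1 / (2 * γ * (m : ℝ))) *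
      (4 * (((m + 1) / 2 : ℕ) : ℝ) ^ 2 * acoef γ n (m + 1)
        - γ ^ 2 * ∑ k ∈ (Finset.Icc (m - 1) (n - 1)).attach,
            ((n - (k : ℕ) + 1 : ℕ) : ℝ) * acoef γ (k : ℕ) (m - 1))
  termination_by n m => (n, n - m)
  decreasing_by
  · apply Prod.Lex.left; omega
  · apply Prod.Lex.right; omega
  · apply Prod.Lex.left
    have hk := k.2
    simp only [Finset.mem_Icc] at hk
    omega

/-- χ_{k,n} -/
noncomputable def chiC (n : ℕ) (k : ℤ) : ℝ :=
  if k = -2 then (n : ℝ) * ((n : ℝ) - 1)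
  else if k = -1 then -4 * (n : ℝ) ^ 2
  else if k = 0 then 2 * (3 * (n : ℝ) ^ 2 + 3 * (n : ℝ) + 1)
  else if k = 1 then -4 * ((n : ℝ) + 1) ^ 2
  else if k = 2 then ((n : ℝ) + 1) * ((n : ℝ) + 2)
  else 0

/-- the sum ∑_{k=-2}^{2} χ_{k,n} f(n+k), terms with n+k<0 omitted -/
noncomputable def sumChi (n : ℕ) (f : ℕ → ℝ) : ℝ :=
  ∑ k ∈ Finset.Icc (-2 : ℤ) 2,
    if 0 ≤ (n : ℤ) + k then chiC n k * f ((n : ℤ) + k).toNat else 0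

noncomputable def besselI0 (z : ℝ) : ℝ := ∑' k : ℕ, (z / 2) ^ (2 * k) / (k.factorial : ℝ) ^ 2

noncomputable def besselI1 (z : ℝ) : ℝ :=
  ∑' k : ℕ, (z / 2) ^ (2 * k + 1) / ((k.factorial : ℝ) * ((k + 1).factorial : ℝ))

noncomputable def psiH (k : ℕ) : ℝ := ∑ j ∈ Finset.range k, (1 : ℝ) / ((j : ℝ) + 1)

noncomputable def besselS0 (z : ℝ) : ℝ :=
  ∑' k : ℕ, psiH k * (z / 2) ^ (2 * k) / (k.factorial : ℝ) ^ 2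

noncomputable def besselS1 (z : ℝ) : ℝ :=
  -(1 / 2) * ∑' k : ℕ, (psiH (k + 1) + psiH k) * (z / 2) ^ (2 * k + 1) /
    ((k.factorial : ℝ) * ((k + 1).factorial : ℝ))

noncomputable def vPol (γ : ℝ) (n : ℕ) (r : ℝ) : ℝ :=
  ∑ m ∈ Finset.range (n / 2 + 1), acoef γ n (2 * m) * r ^ (2 * m)

noncomputable def wPol (γ : ℝ) (n : ℕ) (r : ℝ) : ℝ :=
  ∑ m ∈ Finset.range ((n - 1) / 2 + 1), acoef γ n (2 * m + 1) * r ^ (2 * m + 1)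

noncomputable def vTil (γ : ℝ) (n : ℕ) (r : ℝ) : ℝ :=
  2 * ∑ m ∈ Finset.Icc 1 (n / 2), (m : ℝ) * acoef γ n (2 * m) * r ^ (2 * m)
    - γ * ∑ m ∈ Finset.range ((n - 1) / 2 + 1), acoef γ n (2 * m + 1) * r ^ (2 * m + 2)

noncomputable def wTil (γ : ℝ) (n : ℕ) (r : ℝ) : ℝ :=
  2 * ∑ m ∈ Finset.Icc 1 ((n - 1) / 2), (m : ℝ) * acoef γ n (2 * m + 1) * r ^ (2 * m + 1)
    - γ * ∑ m ∈ Finset.range (n / 2 + 1), acoef γ n (2 * m) * r ^ (2 * m + 1)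

noncomputable def phiF (γ : ℝ) (n : ℕ) (r : ℝ) : ℝ :=
  -besselI0 (γ * r) * vPol γ n r + besselI1 (γ * r) * wPol γ n r

noncomputable def phiHat (γ : ℝ) (n : ℕ) (r : ℝ) : ℝ :=
  (-(Real.eulerMascheroniConstant + Real.log (γ / 2)) * besselI0 (γ * r) + besselS0 (γ * r)) * vPol γ n r
    + (1 / (γ * r) + (Real.eulerMascheroniConstant + Real.log (γ / 2)) * besselI1 (γ * r)
        + besselS1 (γ * r)) * wPol γ n r

noncomputable def phiTil (γ : ℝ) (n : ℕ) (r : ℝ) : ℝ :=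
  -besselI0 (γ * r) * vTil γ n r + besselI1 (γ * r) * wTil γ n r

noncomputable def phiHatTil (γ : ℝ) (n : ℕ) (r : ℝ) : ℝ :=
  (-(Real.eulerMascheroniConstant + Real.log (γ / 2)) * besselI0 (γ * r) + besselS0 (γ * r)) * vTil γ n r
    + (1 / (γ * r) + (Real.eulerMascheroniConstant + Real.log (γ / 2)) * besselI1 (γ * r)
        + besselS1 (γ * r)) * wTil γ n r

noncomputable def etaF (κ cs cp : ℝ) (ℓ n : ℕ) (r : ℝ) : ℝ :=
  (-(ℓ : ℝ)) ^ (ℓ - 1) / (κ ^ 2 * r ^ 2) *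
      sumChi n (fun j => phiF (κ / cs) j r - phiF (κ / cp) j r)
    + (-1 : ℝ) ^ (ℓ - 1) / cp ^ 2 * phiF (κ / cp) n r
    + ((ℓ : ℝ) - 1) / cs ^ 2 * phiF (κ / cs) n r

noncomputable def xiF (κ cs cp : ℝ) (ℓ n : ℕ) (r : ℝ) : ℝ :=
  (-(ℓ : ℝ)) ^ (ℓ - 1) / (κ ^ 2 * r ^ 2) *
      sumChi n (fun j => phiHat (κ / cs) j r - phiHat (κ / cp) j r)
    + (-1 : ℝ) ^ (ℓ - 1) / cp ^ 2 * phiHat (κ / cp) n r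
    + ((ℓ : ℝ) - 1) / cs ^ 2 * phiHat (κ / cs) n r

noncomputable def etaTil (κ cs cp : ℝ) (ℓ n : ℕ) (r : ℝ) : ℝ :=
  (-(ℓ : ℝ)) ^ (ℓ - 1) / (κ ^ 2 * r ^ 2) *
      sumChi n (fun j => phiTil (κ / cs) j r - 2 * phiF (κ / cs) j r
        + 2 * phiF (κ / cp) j r - phiTil (κ / cp) j r)
    + (-1 : ℝ) ^ (ℓ - 1) / cp ^ 2 * phiTil (κ / cp) n r
    + ((ℓ : ℝ) - 1) / cs ^ 2 * phiTil (κ / cs) n r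

noncomputable def xiTil (κ cs cp : ℝ) (ℓ n : ℕ) (r : ℝ) : ℝ :=
  (-(ℓ : ℝ)) ^ (ℓ - 1) / (κ ^ 2 * r ^ 2) *
      sumChi n (fun j => phiHatTil (κ / cs) j r - 2 * phiHat (κ / cs) j r
        + 2 * phiHat (κ / cp) j r - phiHatTil (κ / cp) j r)
    + (-1 : ℝ) ^ (ℓ - 1) / cp ^ 2 * phiHatTil (κ / cp) n r
    + ((ℓ : ℝ) - 1) / cs ^ 2 * phiHatTil (κ / cs) n r

lemma acoef_zero (γ : ℝ) (m : ℕ) : acoef γ m 0 = 1 := by rw [acoef]; simp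

lemma gaussN : ∀ M : ℕ, 2 * ∑ k ∈ Finset.range M, (M - k + 1) = M * (M + 3) := by
  intro M
  induction M with
  | zero => simp
  | succ M ih =>
    rw [Finset.sum_range_succ]
    have h : ∑ k ∈ Finset.range M, (M + 1 - k + 1) =
        (∑ k ∈ Finset.range M, (M - k + 1)) + M := by
      have : ∀ k ∈ Finset.range M, M + 1 - k + 1 = (M - k + 1) + 1 := by
        intro k hk; simp only [Finset.mem_range] at hk; omega
      rw [Finset.sum_congr rfl this, Finset.sum_add_distrib, Finset.sum_const,
        Finset.card_range, smul_eq_mul, mul_one]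
    rw [h]
    have : M + 1 - M + 1 = 2 := by omega
    rw [this]
    nlinarith [ih]

lemma acoef_one (γ : ℝ) (hγ : γ ≠ 0) (n : ℕ) :
    acoef γ (n + 2) 1 = 1 / (2 * γ) *
      (4 * acoef γ (n + 2) 2 - γ ^ 2 * (((n : ℝ) + 2) * ((n : ℝ) + 5) / 2)) := by
  rw [acoef]
  rw [if_neg (by omega : ¬(1 = 0)), if_neg (by omega : ¬(n + 2 < 1)),
    if_neg (by omega : ¬(1 = n + 2))]
  have hs : ∑ k ∈ (Finset.Icc (1 - 1) (n + 2 - 1)).attach,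
      ((n + 2 - (k : ℕ) + 1 : ℕ) : ℝ) * acoef γ (k : ℕ) (1 - 1)
      = ((n : ℝ) + 2) * ((n : ℝ) + 5) / 2 := by
    rw [Finset.sum_attach (Finset.Icc (1 - 1) (n + 2 - 1))
      (fun k => ((n + 2 - k + 1 : ℕ) : ℝ) * acoef γ k (1 - 1))]
    have hset : Finset.Icc (1 - 1) (n + 2 - 1) = Finset.range (n + 2) := by
      ext x; simp [Finset.mem_Icc]; omega
    rw [hset]
    simp only [show (1 - 1 : ℕ) = 0 from rfl, acoef_zero, mul_one]
    have h2 := gaussN (n + 2)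
    have h3 : ((2 * ∑ k ∈ Finset.range (n + 2), (n + 2 - k + 1) : ℕ) : ℝ)
        = (((n + 2) * (n + 2 + 3) : ℕ) : ℝ) := by rw [h2]
    push_cast at h3 ⊢
    linarith
  rw [hs]
  norm_num

lemma eps_eq (γ : ℝ) (hγ : γ ≠ 0) (m : ℕ) :
    -(γ ^ 2 / 4) * acoef γ m 0 + (γ / 2) * acoef γ m 1 - acoef γ m 2
      = -(γ ^ 2) * ((m : ℝ) + 1) * ((m : ℝ) + 2) / 8 := by
  match m with
  | 0 =>
    have h1 : acoef γ 0 1 = 0 := by rw [acoef]; norm_num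
    have h2 : acoef γ 0 2 = 0 := by rw [acoef]; norm_num
    rw [acoef_zero, h1, h2]; norm_num; ring
  | 1 =>
    have h1 : acoef γ 1 1 = -γ := by rw [acoef]; norm_num [acoef_zero]
    have h2 : acoef γ 1 2 = 0 := by rw [acoef]; norm_num
    rw [acoef_zero, h1, h2]; norm_num; ring
  | (n + 2) =>
    rw [acoef_zero, acoef_one γ hγ n]
    field_simp
    push_cast
    ring

/-- ∑_{k=-2}^{2} χ_{k,n} ε_{n+k,2}(γ) = −γ²/2, where
ε_{m,2}(γ) = −(γ²/4) a_{m,0}(γ) + (γ/2) a_{m,1}(γ) − a_{m,2}(γ). -/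
theorem sumChi_eps_two (γ : ℝ) (hγ : 0 < γ) (n : ℕ) :
    sumChi n (fun m => -(γ ^ 2 / 4) * acoef γ m 0 + (γ / 2) * acoef γ m 1 - acoef γ m 2)
      = -γ ^ 2 / 2 := by
  have hf : (fun m => -(γ ^ 2 / 4) * acoef γ m 0 + (γ / 2) * acoef γ m 1 - acoef γ m 2)
      = fun m : ℕ => -(γ ^ 2) * ((m : ℝ) + 1) * ((m : ℝ) + 2) / 8 :=
    funext (eps_eq γ hγ.ne')
  simp only [sumChi, eps_eq γ hγ.ne']
  rw [show Finset.Icc (-2 : ℤ) 2 = {-2, -1, 0, 1, 2} from rfl]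
  rw [Finset.sum_insert (by decide), Finset.sum_insert (by decide),
    Finset.sum_insert (by decide), Finset.sum_insert (by decide), Finset.sum_singleton]
  rcases n with _ | _ | k
  · norm_num [chiC, Int.toNat_natCast]
    simp only [show Int.toNat 2 = 2 from rfl]
    norm_num
    ring
  · norm_num [chiC, Int.toNat_natCast]
    simp only [show Int.toNat 2 = 2 from rfl, show Int.toNat 3 = 3 from rfl]
    norm_num
    ring
  · have e1 : ((k + 2 : ℕ) : ℤ) + -2 = ((k : ℕ) : ℤ) := by push_cast; ring
    have e2 : ((k + 2 : ℕ) : ℤ) + -1 = ((k + 1 : ℕ) : ℤ) := by push_cast; ring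
    have e3 : ((k + 2 : ℕ) : ℤ) + 0 = ((k + 2 : ℕ) : ℤ) := by push_cast; ring
    have e4 : ((k + 2 : ℕ) : ℤ) + 1 = ((k + 3 : ℕ) : ℤ) := by push_cast; ring
    have e5 : ((k + 2 : ℕ) : ℤ) + 2 = ((k + 4 : ℕ) : ℤ) := by push_cast; ring
    rw [if_pos (by omega), if_pos (by omega), if_pos (by omega),
      if_pos (by omega), if_pos (by omega),
      e1, e2, e3, e4, e5, Int.toNat_natCast, Int.toNat_natCast, Int.toNat_natCast,
      Int.toNat_natCast, Int.toNat_natCast]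
    simp only [chiC]
    norm_num
    push_cast
    ring
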